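/- Let f : ℤ² → D be given by f(x,y) = g((x + 3y) mod 11) with g the base pattern sending 0,…,10 to N, NE, E, SE, S, SW, W, NW, N, NE, E. Then for any point v ∈ ℤ², any direction vector d ∈ {(1,0), (0,1), (1,1), (1,−1)}, and any target direction X ∈ D, the number of indices i ∈ {0, 1, …, 10} with f(v + i·d) = X is at least 1 and at most 2. -/

import Mathlib

/-- The eight compass directions. -/
inductive Dir : Type
  | N | NE | E | SE | S | SW | W | NW
  deriving DecidableEq

instance instFintypeDir : Fintype Dir :=
  ⟨⟨[Dir.N, Dir.NE, Dir.E, Dir.SE, Dir.S, Dir.SW, Dir.W, Dir.NW], by decide⟩,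
    fun x => by cases x <;> decide⟩

open Dir in
/-- The base pattern sending residues 0,…,10 mod 11 to
N, NE, E, SE, S, SW, W, NW, N, NE, E respectively. -/
def g : ZMod 11 → Dir := fun z =>
  match z.val with
  | 0 => N | 1 => NE | 2 => E | 3 => SE | 4 => S
  | 5 => SW | 6 => W | 7 => NW | 8 => N | 9 => NE | _ => E

/-- The direction assignment `f(x,y) = g((x + 3y) mod 11)`. -/
def f (v : ℤ × ℤ) : Dir := g ((v.1 + 3 * v.2 : ℤ) : ZMod 11)

lemma aux_key : ∀ (c : ZMod 11), ∀ s ∈ ({1, 3, 4, -2} : Finset (ZMod 11)), ∀ X : Dir,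
    1 ≤ ((Finset.range 11).filter fun i : ℕ => g (c + (i : ZMod 11) * s) = X).card ∧
    ((Finset.range 11).filter fun i : ℕ => g (c + (i : ZMod 11) * s) = X).card ≤ 2 := by
  decide

/-- Among any 11 consecutive points of a horizontal, vertical or diagonal line,
each direction is assigned to at least 1 and at most 2 of the points. -/
theorem each_direction_once_or_twice_per_window (v : ℤ × ℤ)
    (d : ℤ × ℤ) (hd : d ∈ ({(1, 0), (0, 1), (1, 1), (1, -1)} : Set (ℤ × ℤ)))
    (X : Dir) :
    1 ≤ ((Finset.range 11).filter fun i : ℕ => f (v + (i : ℤ) • d) = X).card ∧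
    ((Finset.range 11).filter fun i : ℕ => f (v + (i : ℤ) • d) = X).card ≤ 2 := by
  have key : ∀ i : ℕ, f (v + (i : ℤ) • d)
      = g (((v.1 + 3 * v.2 : ℤ) : ZMod 11) + (i : ZMod 11) * ((d.1 + 3 * d.2 : ℤ) : ZMod 11)) := by
    intro i
    simp only [f, Prod.fst_add, Prod.snd_add, Prod.smul_fst, Prod.smul_snd, smul_eq_mul]
    congr 1
    push_cast
    ring
  simp only [key]
  apply aux_key ((v.1 + 3 * v.2 : ℤ) : ZMod 11) ((d.1 + 3 * d.2 : ℤ) : ZMod 11) _ X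
  rcases hd with h | h | h | h <;> subst h <;> decide
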